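/- Let H ⊆ ℝᴺ be a closed half-space with reflection σ_H. The polarization map u ↦ u^H is a contraction on L^p(ℝᴺ) for 1 ≤ p < ∞: for all u, v ∈ L^p(ℝᴺ), ‖u^H − v^H‖_{L^p} ≤ ‖u − v‖_{L^p}. -/

import Mathlib

open MeasureTheory Classical ENNReal

/-- The reflection across the boundary hyperplane `{x | ⟪x, a⟫ = t}` of the
closed half-space `{x | ⟪x, a⟫ ≤ t}`, where `a` is a unit vector. -/
noncomputable def reflect {N : ℕ} (a : EuclideanSpace ℝ (Fin N)) (t : ℝ)
    (x : EuclideanSpace ℝ (Fin N)) : EuclideanSpace ℝ (Fin N) :=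
  x - (2 * ((inner ℝ x a : ℝ) - t)) • a

/-- The closed half-space `{x | ⟪x, a⟫ ≤ t}`. -/
def halfSpace {N : ℕ} (a : EuclideanSpace ℝ (Fin N)) (t : ℝ) :
    Set (EuclideanSpace ℝ (Fin N)) :=
  {x | (inner ℝ x a : ℝ) ≤ t}

/-- The polarization of `u` with respect to the half-space `halfSpace a t`. -/
noncomputable def polarize {N : ℕ} (a : EuclideanSpace ℝ (Fin N)) (t : ℝ)
    (u : EuclideanSpace ℝ (Fin N) → ℝ) (x : EuclideanSpace ℝ (Fin N)) : ℝ :=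
  if x ∈ halfSpace a t then max (u x) (u (reflect a t x))
  else min (u x) (u (reflect a t x))

section Aux

variable {N : ℕ} (a : EuclideanSpace ℝ (Fin N)) (t : ℝ)

lemma inner_reflect (ha : ‖a‖ = 1) (x : EuclideanSpace ℝ (Fin N)) :
    (inner ℝ (reflect a t x) a : ℝ) = 2 * t - inner ℝ x a := by
  have haa : (inner ℝ a a : ℝ) = 1 := by
    rw [real_inner_self_eq_norm_sq, ha]; norm_num
  simp only [reflect, inner_sub_left, real_inner_smul_left, haa]
  ring

lemma reflect_reflect (ha : ‖a‖ = 1) (x : EuclideanSpace ℝ (Fin N)) :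
    reflect a t (reflect a t x) = x := by
  rw [reflect, inner_reflect a t ha]
  simp only [reflect]
  module

lemma continuous_reflect : Continuous (reflect a t) := by
  unfold reflect
  exact continuous_id.sub
    ((continuous_const.mul ((continuous_id.inner (𝕜 := ℝ) continuous_const).sub continuous_const)).smul
      continuous_const)

lemma measurePreserving_reflect (ha : ‖a‖ = 1) :
    MeasurePreserving (reflect a t) (volume : Measure (EuclideanSpace ℝ (Fin N))) volume := by
  -- linear part
  set L : EuclideanSpace ℝ (Fin N) →ₗ[ℝ] EuclideanSpace ℝ (Fin N) :=
    { toFun := fun x => x - (2 * (inner ℝ x a : ℝ)) • a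
      map_add' := by
        intro x y
        show (x + y) - (2 * (inner ℝ (x + y) a : ℝ)) • a
          = (x - (2 * (inner ℝ x a : ℝ)) • a) + (y - (2 * (inner ℝ y a : ℝ)) • a)
        rw [inner_add_left]
        module
      map_smul' := by
        intro c x
        show (c • x) - (2 * (inner ℝ (c • x) a : ℝ)) • a
          = c • (x - (2 * (inner ℝ x a : ℝ)) • a)
        rw [real_inner_smul_left]
        module } with hL
  have haa : (inner ℝ a a : ℝ) = 1 := by
    rw [real_inner_self_eq_norm_sq, ha]; norm_num
  have hinv : Function.Involutive L := by
    intro x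
    show (x - (2 * (inner ℝ x a : ℝ)) • a)
        - (2 * (inner ℝ (x - (2 * (inner ℝ x a : ℝ)) • a) a : ℝ)) • a = x
    rw [inner_sub_left, real_inner_smul_left, haa]
    module
  have hnorm : ∀ x : EuclideanSpace ℝ (Fin N), ‖L x‖ = ‖x‖ := by
    intro x
    have h1 : ‖L x‖ ^ 2 = ‖x‖ ^ 2 := by
      show ‖x - (2 * (inner ℝ x a : ℝ)) • a‖ ^ 2 = ‖x‖ ^ 2
      rw [norm_sub_sq_real, real_inner_smul_right, norm_smul, Real.norm_eq_abs, ha, mul_one,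
        sq_abs]
      ring
    rw [← Real.sqrt_sq (norm_nonneg (L x)), ← Real.sqrt_sq (norm_nonneg x), h1]
  set R : EuclideanSpace ℝ (Fin N) ≃ₗᵢ[ℝ] EuclideanSpace ℝ (Fin N) :=
    ⟨LinearEquiv.ofInvolutive L hinv, hnorm⟩ with hR
  have hcomp : reflect a t = (fun y => y + (2 * t) • a) ∘ R := by
    funext x
    simp only [Function.comp_apply, hR, reflect]
    show x - (2 * ((inner ℝ x a : ℝ) - t)) • a = (x - (2 * (inner ℝ x a : ℝ)) • a) + (2 * t) • a
    module
  rw [hcomp]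
  exact (measurePreserving_add_right volume ((2 * t) • a)).comp R.measurePreserving

end Aux

lemma convexOn_abs_rpow {q : ℝ} (hq : 1 ≤ q) :
    ConvexOn ℝ Set.univ (fun z : ℝ => |z| ^ q) := by
  have himg : (fun z : ℝ => |z|) '' Set.univ = Set.Ici 0 := by
    ext z
    simp only [Set.image_univ, Set.mem_range, Set.mem_Ici]
    constructor
    · rintro ⟨w, rfl⟩; exact abs_nonneg w
    · intro hz; exact ⟨z, abs_of_nonneg hz⟩
  have hg : ConvexOn ℝ ((fun z : ℝ => |z|) '' Set.univ) (fun x : ℝ => x ^ q) := by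
    rw [himg]; exact convexOn_rpow hq
  have hmono : MonotoneOn (fun x : ℝ => x ^ q) ((fun z : ℝ => |z|) '' Set.univ) := by
    rw [himg]
    intro x hx y hy hxy
    exact Real.rpow_le_rpow hx hxy (by linarith)
  have habs : ConvexOn ℝ Set.univ (fun z : ℝ => |z|) := by
    refine ⟨convex_univ, fun x _ y _ a b ha hb _ => ?_⟩
    simp only [smul_eq_mul]
    calc |a * x + b * y| ≤ |a * x| + |b * y| := abs_add_le _ _
      _ = a * |x| + b * |y| := by rw [abs_mul, abs_mul, abs_of_nonneg ha, abs_of_nonneg hb]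
  exact hg.comp habs hmono

lemma maj_lemma {q : ℝ} (hq : 1 ≤ q) {m M x y : ℝ} (h1 : m ≤ x) (h2 : x ≤ M)
    (hsum : x + y = m + M) : |x| ^ q + |y| ^ q ≤ |m| ^ q + |M| ^ q := by
  rcases eq_or_lt_of_le (h1.trans h2) with h | h
  · have hx : x = m := le_antisymm (h ▸ h2) h1
    have hy : y = M := by linarith
    rw [hx, hy, ← h]
  · set l : ℝ := (M - x) / (M - m) with hl
    have hMm : (0:ℝ) < M - m := by linarith
    have hl0 : 0 ≤ l := div_nonneg (by linarith) hMm.le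
    have hl1 : l ≤ 1 := (div_le_one hMm).2 (by linarith)
    have hlm : l * (M - m) = M - x := by
      rw [hl]; field_simp
    have hx' : x = l * m + (1 - l) * M := by linear_combination hlm
    have hy' : y = (1 - l) * m + l * M := by linear_combination hsum - hlm
    have hc := convexOn_abs_rpow hq
    have hA := hc.2 (Set.mem_univ m) (Set.mem_univ M) hl0
      (show (0:ℝ) ≤ 1 - l by linarith) (show l + (1 - l) = 1 by ring)
    have hB := hc.2 (Set.mem_univ m) (Set.mem_univ M)
      (show (0:ℝ) ≤ 1 - l by linarith) hl0 (show (1 - l) + l = 1 by ring)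
    simp only [smul_eq_mul] at hA hB
    rw [hx', hy']
    calc |l * m + (1 - l) * M| ^ q + |(1 - l) * m + l * M| ^ q
        ≤ (l * |m| ^ q + (1 - l) * |M| ^ q) + ((1 - l) * |m| ^ q + l * |M| ^ q) :=
          add_le_add hA hB
      _ = |m| ^ q + |M| ^ q := by ring

lemma key_ineq {q : ℝ} (hq : 1 ≤ q) (a b c d : ℝ) :
    |max a b - max c d| ^ q + |min a b - min c d| ^ q ≤ |a - c| ^ q + |b - d| ^ q := by
  rcases le_total a b with hab | hab <;> rcases le_total c d with hcd | hcd
  · rw [max_eq_right hab, max_eq_right hcd, min_eq_left hab, min_eq_left hcd, add_comm]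
  · rw [max_eq_right hab, max_eq_left hcd, min_eq_left hab, min_eq_right hcd]
    -- |b - c|^q + |a - d|^q ≤ |a - c|^q + |b - d|^q, with a ≤ b, d ≤ c
    exact maj_lemma hq (by linarith) (by linarith) (by ring)
  · rw [max_eq_left hab, max_eq_right hcd, min_eq_right hab, min_eq_left hcd]
    -- |a - d|^q + |b - c|^q ≤ |a - c|^q + |b - d|^q, with b ≤ a, c ≤ d
    rw [add_comm (|a-c|^q)]
    exact maj_lemma hq (by linarith) (by linarith) (by ring)
  · rw [max_eq_left hab, max_eq_left hcd, min_eq_right hab, min_eq_right hcd]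

lemma key_ineq_ennreal {q : ℝ} (hq : 1 ≤ q) (a b c d : ℝ) :
    (‖max a b - max c d‖₊ : ℝ≥0∞) ^ q + (‖min a b - min c d‖₊ : ℝ≥0∞) ^ q
      ≤ (‖a - c‖₊ : ℝ≥0∞) ^ q + (‖b - d‖₊ : ℝ≥0∞) ^ q := by
  have hq0 : 0 ≤ q := by linarith
  have e : ∀ r : ℝ, (‖r‖₊ : ℝ≥0∞) ^ q = ENNReal.ofReal (|r| ^ q) := fun r => by
    rw [← enorm_eq_nnnorm, Real.enorm_eq_ofReal_abs, ENNReal.ofReal_rpow_of_nonneg (abs_nonneg r) hq0]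
  rw [e, e, e, e, ← ENNReal.ofReal_add (by positivity) (by positivity),
    ← ENNReal.ofReal_add (by positivity) (by positivity)]
  exact ENNReal.ofReal_le_ofReal (key_ineq hq a b c d)

lemma polarize_congr_ae {N : ℕ} (a : EuclideanSpace ℝ (Fin N)) (t : ℝ) (ha : ‖a‖ = 1)
    {u u' : EuclideanSpace ℝ (Fin N) → ℝ} (h : u =ᵐ[volume] u') :
    polarize a t u =ᵐ[volume] polarize a t u' := by
  have hσ := (measurePreserving_reflect a t ha).quasiMeasurePreserving
  have h2 : (fun x => u (reflect a t x)) =ᵐ[volume] fun x => u' (reflect a t x) :=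
    hσ.ae_eq h
  filter_upwards [h, h2] with x hx hx2
  simp only [polarize, hx, hx2]

lemma measurable_polarize {N : ℕ} (a : EuclideanSpace ℝ (Fin N)) (t : ℝ)
    {u : EuclideanSpace ℝ (Fin N) → ℝ} (hu : Measurable u) :
    Measurable (polarize a t u) := by
  have hσ : Measurable (reflect a t) := (continuous_reflect a t).measurable
  have hs : MeasurableSet (halfSpace a t) := by
    have : Continuous fun x : EuclideanSpace ℝ (Fin N) => (inner ℝ x a : ℝ) :=
      continuous_id.inner continuous_const
    exact measurableSet_le this.measurable measurable_const
  exact Measurable.ite hs (hu.max (hu.comp hσ)) (hu.min (hu.comp hσ))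

/-- Polarization is a contraction on `L^p`. -/
theorem polarization_contraction {N : ℕ} (a : EuclideanSpace ℝ (Fin N)) (t : ℝ)
    (ha : ‖a‖ = 1) (p : ℝ≥0∞) (hp : 1 ≤ p) (hp' : p ≠ ⊤)
    (u v : EuclideanSpace ℝ (Fin N) → ℝ)
    (hu : MemLp u p volume) (hv : MemLp v p volume) :
    eLpNorm (fun x => polarize a t u x - polarize a t v x) p volume
      ≤ eLpNorm (fun x => u x - v x) p volume := by
  have hp0 : p ≠ 0 := by
    intro h; rw [h] at hp; exact (not_le.2 zero_lt_one) (by exact_mod_cast hp)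
  set q : ℝ := p.toReal with hqdef
  have hq1 : 1 ≤ q := by
    rw [hqdef, ← ENNReal.toReal_one]
    exact ENNReal.toReal_mono hp' hp
  have hq0 : 0 < q := by linarith
  -- replace u, v by measurable representatives
  obtain ⟨u', hu'meas, hu'⟩ := hu.1
  obtain ⟨v', hv'meas, hv'⟩ := hv.1
  have hu'm : Measurable u' := hu'meas.measurable
  have hv'm : Measurable v' := hv'meas.measurable
  have hL : eLpNorm (fun x => polarize a t u x - polarize a t v x) p volume
      = eLpNorm (fun x => polarize a t u' x - polarize a t v' x) p volume := by
    apply eLpNorm_congr_ae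
    filter_upwards [polarize_congr_ae a t ha hu', polarize_congr_ae a t ha hv'] with x h1 h2
    simp [h1, h2]
  have hRfun : eLpNorm (fun x => u x - v x) p volume
      = eLpNorm (fun x => u' x - v' x) p volume := by
    apply eLpNorm_congr_ae
    filter_upwards [hu', hv'] with x h1 h2
    simp [h1, h2]
  rw [hL, hRfun, eLpNorm_eq_lintegral_rpow_enorm_toReal hp0 hp',
    eLpNorm_eq_lintegral_rpow_enorm_toReal hp0 hp']
  apply ENNReal.rpow_le_rpow _ (by positivity)
  -- main lintegral inequality
  set σ : EuclideanSpace ℝ (Fin N) → EuclideanSpace ℝ (Fin N) := reflect a t with hσdef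
  set F : EuclideanSpace ℝ (Fin N) → ℝ≥0∞ :=
    fun x => (‖polarize a t u' x - polarize a t v' x‖₊ : ℝ≥0∞) ^ q with hF
  set G : EuclideanSpace ℝ (Fin N) → ℝ≥0∞ :=
    fun x => (‖u' x - v' x‖₊ : ℝ≥0∞) ^ q with hG
  show ∫⁻ x, F x ≤ ∫⁻ x, G x
  have hσmp : MeasurePreserving σ (volume : Measure (EuclideanSpace ℝ (Fin N))) volume :=
    measurePreserving_reflect a t ha
  have hFm : Measurable F :=
    (((measurable_polarize a t hu'm).sub (measurable_polarize a t hv'm)).enorm).pow_const q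
  have hGm : Measurable G :=
    ((hu'm.sub hv'm).enorm).pow_const q
  have hkey : ∀ x, F x + F (σ x) ≤ G x + G (σ x) := by
    intro x
    have hσσ : σ (σ x) = x := reflect_reflect a t ha x
    have hinner : (inner ℝ (σ x) a : ℝ) = 2 * t - inner ℝ x a := inner_reflect a t ha x
    by_cases hx : x ∈ halfSpace a t <;> by_cases hσx : σ x ∈ halfSpace a t
    · -- both in: boundary, σ x = x
      have ht : (inner ℝ x a : ℝ) = t := by
        have h1 : (inner ℝ x a : ℝ) ≤ t := hx
        have h2 : 2 * t - (inner ℝ x a : ℝ) ≤ t := by rw [← hinner]; exact hσx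
        linarith
      have hfix : reflect a t x = x := by
        simp only [reflect, ht, sub_self, mul_zero, zero_smul, sub_zero]
      have hfix' : σ x = x := hfix
      rw [hfix']
      have h1 : polarize a t u' x = u' x := by simp [polarize, hx, hfix]
      have h2 : polarize a t v' x = v' x := by simp [polarize, hx, hfix]
      simp only [hF, hG, h1, h2, le_refl]
    · -- x ∈ H, σ x ∉ H
      have e1 : F x = (‖max (u' x) (u' (σ x)) - max (v' x) (v' (σ x))‖₊ : ℝ≥0∞) ^ q := by
        simp [hF, polarize, hx, ← hσdef]
      have e2 : F (σ x) = (‖min (u' x) (u' (σ x)) - min (v' x) (v' (σ x))‖₊ : ℝ≥0∞) ^ q := by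
        simp only [hF, polarize, if_neg hσx, ← hσdef, hσσ]
        rw [min_comm (u' (σ x)) (u' x), min_comm (v' (σ x)) (v' x)]
      rw [e1, e2]
      exact key_ineq_ennreal hq1 (u' x) (u' (σ x)) (v' x) (v' (σ x))
    · -- x ∉ H, σ x ∈ H
      have e1 : F x = (‖min (u' x) (u' (σ x)) - min (v' x) (v' (σ x))‖₊ : ℝ≥0∞) ^ q := by
        simp [hF, polarize, hx, ← hσdef]
      have e2 : F (σ x) = (‖max (u' x) (u' (σ x)) - max (v' x) (v' (σ x))‖₊ : ℝ≥0∞) ^ q := by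
        simp only [hF, polarize, if_pos hσx, ← hσdef, hσσ]
        rw [max_comm (u' (σ x)) (u' x), max_comm (v' (σ x)) (v' x)]
      rw [add_comm (F x) (F (σ x)), e2, e1]
      exact key_ineq_ennreal hq1 (u' x) (u' (σ x)) (v' x) (v' (σ x))
    · -- both out: impossible
      exfalso
      have h1 : ¬ (inner ℝ x a : ℝ) ≤ t := hx
      have h2 : ¬ (2 * t - (inner ℝ x a : ℝ)) ≤ t := by rw [← hinner]; exact hσx
      push_neg at h1 h2
      linarith
  have hFσ : ∫⁻ x, F (σ x) = ∫⁻ x, F x := hσmp.lintegral_comp hFm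
  have hGσ : ∫⁻ x, G (σ x) = ∫⁻ x, G x := hσmp.lintegral_comp hGm
  have h2 : 2 * ∫⁻ x, F x ≤ 2 * ∫⁻ x, G x := by
    calc 2 * ∫⁻ x, F x = (∫⁻ x, F x) + ∫⁻ x, F (σ x) := by rw [hFσ, two_mul]
      _ = ∫⁻ x, (F x + F (σ x)) := (lintegral_add_left hFm _).symm
      _ ≤ ∫⁻ x, (G x + G (σ x)) := lintegral_mono hkey
      _ = (∫⁻ x, G x) + ∫⁻ x, G (σ x) := lintegral_add_left hGm _
      _ = 2 * ∫⁻ x, G x := by rw [hGσ, two_mul]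
  exact (ENNReal.mul_le_mul_iff_right (two_ne_zero) (ENNReal.ofNat_ne_top)).1 h2
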